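/- For every β > 1 and every i ≥ 1, the shifted sequence σ^i ε*(1,β) is lexicographically less than or equal to ε*(1,β), where σ is the shift map on sequences. -/

import Mathlib

open Filter Topology

/-- The β-transformation `T_β x = βx - ⌊βx⌋`. -/
noncomputable def Tb (β : ℝ) (x : ℝ) : ℝ := β * x - ⌊β * x⌋

/-- The (n+1)-st digit `ε_{n+1}(x, β) = ⌊β T_β^{n} x⌋` of the β-expansion of `x`. -/
noncomputable def digit (β : ℝ) (x : ℝ) (n : ℕ) : ℕ := (⌊β * (Tb β)^[n] x⌋).toNat

/-- Strict lexicographical order on sequences of naturals. -/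
def lexLt (a b : ℕ → ℕ) : Prop := ∃ k, (∀ j, j < k → a j = b j) ∧ a k < b k

def lexLe (a b : ℕ → ℕ) : Prop := lexLt a b ∨ a = b

/-- A finite word padded with zeros to an infinite sequence. -/
def pad {n : ℕ} (ω : Fin n → ℕ) : ℕ → ℕ := fun k => if h : k < n then ω ⟨k, h⟩ else 0

/-- The prefix of length `m` of a padded word, again padded with zeros. -/
def trunc {n : ℕ} (ω : Fin n → ℕ) (m : ℕ) : ℕ → ℕ := fun k => if k < m then pad ω k else 0

/-- A word `ω` of length `n` is self-admissible if `σ^i ω ≤_lex (ω_1, …, ω_{n-i})`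
for all `1 ≤ i < n` (comparison after padding with zeros). -/
def selfAdmissible {n : ℕ} (ω : Fin n → ℕ) : Prop :=
  ∀ i, 1 ≤ i → i < n → lexLe (fun k => pad ω (k + i)) (trunc ω (n - i))

/-- Lexicographic order on words of the same length. -/
def wordLt {n : ℕ} (ω ω' : Fin n → ℕ) : Prop := lexLt (pad ω) (pad ω')

def wordLe {n : ℕ} (ω ω' : Fin n → ℕ) : Prop := wordLt ω ω' ∨ ω = ω'

/-- The recurrence time `τ(ω)`: the least `1 ≤ k < n` with
`σ^k(ω_1,…,ω_n) = (ω_1,…,ω_{n-k})`, and `n` if there is no such `k`. -/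
noncomputable def tau {n : ℕ} (ω : Fin n → ℕ) : ℕ :=
  sInf ({k | 1 ≤ k ∧ k < n ∧ ∀ j, j < n - k → pad ω (k + j) = pad ω j} ∪ {n})

/-- The cylinder of the word `ω` in the parameter space `(1, ∞)`. -/
def cylP (n : ℕ) (ω : Fin n → ℕ) : Set ℝ := {β : ℝ | 1 < β ∧ ∀ i : Fin n, digit β 1 i = ω i}

/-- The first `n` digits of the β-expansion of `1`. -/
noncomputable def prefixW (β : ℝ) (n : ℕ) : Fin n → ℕ := fun i => digit β 1 i

/-- The `n`-th recurrence time `τ_n(β)` of `β`. -/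
noncomputable def tauN (β : ℝ) (n : ℕ) : ℕ := tau (prefixW β n)

/-- `t_n(β) = n - ⌊n / τ_n(β)⌋ τ_n(β)`. -/
noncomputable def tN (β : ℝ) (n : ℕ) : ℕ := n - (n / tauN β n) * tauN β n

/-- Left endpoint `β̲_n` of the `n`-th cylinder of `β` in the parameter space. -/
noncomputable def lEnd (β : ℝ) (n : ℕ) : ℝ := sInf (cylP n (prefixW β n))

/-- Right endpoint `β̄_n` of the `n`-th cylinder of `β` in the parameter space. -/
noncomputable def rEnd (β : ℝ) (n : ℕ) : ℝ := sSup (cylP n (prefixW β n))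

/-- The set `Σ_β^n` of β-admissible words of length `n`. -/
def SigmaB (β : ℝ) (n : ℕ) : Set (Fin n → ℕ) :=
  {w | ∃ x : ℝ, 0 ≤ x ∧ x < 1 ∧ ∀ i : Fin n, digit β x i = w i}

open Classical in
/-- The infinite β-expansion `ε*(1, β)` of `1`. -/
noncomputable def epsStar (β : ℝ) : ℕ → ℕ :=
  if h : ∃ m, digit β 1 m ≠ 0 ∧ ∀ k, m < k → digit β 1 k = 0 then
    fun n =>
      if n % (h.choose + 1) = h.choose then digit β 1 h.choose - 1
      else digit β 1 (n % (h.choose + 1))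
  else digit β 1

lemma Tb_nonneg (β x : ℝ) : 0 ≤ Tb β x := sub_nonneg.2 (Int.floor_le _)

lemma Tb_lt_one (β x : ℝ) : Tb β x < 1 := by
  have := Int.lt_floor_add_one (β * x); unfold Tb; linarith

lemma iter_nonneg (β : ℝ) (n : ℕ) : 0 ≤ (Tb β)^[n] 1 := by
  cases n with
  | zero => norm_num
  | succ k => rw [Function.iterate_succ_apply']; exact Tb_nonneg β _

lemma iter_le_one (β : ℝ) (n : ℕ) : (Tb β)^[n] 1 ≤ 1 := by
  cases n with
  | zero => norm_num
  | succ k => rw [Function.iterate_succ_apply']; exact le_of_lt (Tb_lt_one β _)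

lemma iter_lt_one (β : ℝ) {n : ℕ} (hn : 1 ≤ n) : (Tb β)^[n] 1 < 1 := by
  obtain ⟨k, rfl⟩ := Nat.exists_eq_add_of_le hn
  rw [Nat.add_comm, Function.iterate_succ_apply']
  exact Tb_lt_one β _

lemma digit_cast (β : ℝ) (hβ : 0 < β) (n : ℕ) :
    ((digit β 1 n : ℕ) : ℝ) = ((⌊β * (Tb β)^[n] 1⌋ : ℤ) : ℝ) := by
  have h : (0:ℤ) ≤ ⌊β * (Tb β)^[n] 1⌋ :=
    Int.floor_nonneg.2 (mul_nonneg hβ.le (iter_nonneg β n))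
  unfold digit
  exact_mod_cast congrArg (Int.cast : ℤ → ℝ) (Int.toNat_of_nonneg h)

lemma digit_rec (β : ℝ) (hβ : 1 < β) (n : ℕ) :
    (Tb β)^[n] 1 = (digit β 1 n : ℝ)/β + (Tb β)^[n+1] 1 / β := by
  have hb : (0:ℝ) < β := lt_trans one_pos hβ
  rw [Function.iterate_succ_apply', digit_cast β hb n]
  set y := (Tb β)^[n] 1
  unfold Tb
  field_simp
  ring

lemma unroll (β : ℝ) (hβ : 1 < β) (a : ℕ → ℕ) (u : ℕ → ℝ)
    (hu : ∀ n, u n = (a n : ℝ)/β + u (n+1)/β) (N : ℕ) :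
    u 0 = (∑ j ∈ Finset.range N, (a j : ℝ)/β^(j+1)) + u N / β^N := by
  have hb : (β:ℝ) ≠ 0 := by intro h; rw [h] at hβ; linarith
  induction N with
  | zero => simp
  | succ k ih =>
    rw [Finset.sum_range_succ, ih, hu k, add_assoc]
    congr 1
    rw [← add_div, div_div, ← pow_succ', add_div]

lemma lex_total (a c : ℕ → ℕ) : lexLe a c ∨ lexLt c a := by
  by_cases h : a = c
  · exact Or.inl (Or.inr h)
  · have hne : ∃ n, a n ≠ c n := by
      by_contra h'
      push_neg at h'
      exact h (funext h')
    have hk := Nat.find_spec hne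
    have hmin : ∀ j, j < Nat.find hne → a j = c j := fun j hj => by
      have := Nat.find_min hne hj
      simpa using this
    rcases Nat.lt_or_ge (a (Nat.find hne)) (c (Nat.find hne)) with h1 | h1
    · exact Or.inl (Or.inl ⟨Nat.find hne, hmin, h1⟩)
    · have h2 : c (Nat.find hne) < a (Nat.find hne) :=
        lt_of_le_of_ne h1 (fun heq => hk heq.symm)
      exact Or.inr ⟨Nat.find hne, fun j hj => (hmin j hj).symm, h2⟩

lemma lex_main (β : ℝ) (hβ : 1 < β) (a c : ℕ → ℕ) (u v : ℕ → ℝ)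
    (hu : ∀ n, u n = (a n : ℝ)/β + u (n+1)/β)
    (hv : ∀ n, v n = (c n : ℝ)/β + v (n+1)/β)
    (hu0 : ∀ n, 0 ≤ u n) (hv1 : ∀ n, v n ≤ 1)
    (hlt : u 0 < v 0) : lexLe a c := by
  rcases lex_total a c with hle | hgt
  · exact hle
  · exfalso
    obtain ⟨k, hk1, hk2⟩ := hgt
    have h1 := unroll β hβ a u hu (k+1)
    have h2 := unroll β hβ c v hv (k+1)
    have hpow : (0:ℝ) < β^(k+1) := pow_pos (lt_trans one_pos hβ) _
    have key : v 0 ≤ u 0 := by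
      rw [h1, h2, Finset.sum_range_succ, Finset.sum_range_succ]
      have heq : ∑ j ∈ Finset.range k, ((c j:ℝ)/β^(j+1))
               = ∑ j ∈ Finset.range k, ((a j:ℝ)/β^(j+1)) :=
        Finset.sum_congr rfl fun j hj => by rw [hk1 j (Finset.mem_range.1 hj)]
      rw [heq]
      have hnum : (c k:ℝ) + v (k+1) ≤ (a k:ℝ) + u (k+1) := by
        have hca : (c k:ℝ) + 1 ≤ (a k:ℝ) := by exact_mod_cast hk2
        have := hv1 (k+1); have := hu0 (k+1); linarith
      have t1 : ((c k:ℝ) + v (k+1))/β^(k+1) ≤ ((a k:ℝ) + u (k+1))/β^(k+1) := by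
        gcongr
      rw [add_div, add_div] at t1
      linarith
    linarith

theorem shift_epsStar_le (β : ℝ) (hβ : 1 < β) (i : ℕ) (hi : 1 ≤ i) :
    lexLe (fun n => epsStar β (n + i)) (epsStar β) := by
  classical
  have hbpos : (0:ℝ) < β := lt_trans one_pos hβ
  by_cases h : ∃ m, digit β 1 m ≠ 0 ∧ ∀ k, m < k → digit β 1 k = 0
  · -- finite expansion case
    simp only [epsStar, dif_pos h]
    obtain ⟨hm0, hmtail⟩ := h.choose_spec
    set m := h.choose with hmdef
    set p := m + 1 with hpdef
    have hppos : 0 < p := Nat.succ_pos m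
    set B : ℕ → ℕ := fun n => if n % p = m then digit β 1 m - 1 else digit β 1 (n % p)
      with hBdef
    show lexLe (fun n => B (n + i)) B
    have hBper : ∀ n n', n % p = n' % p → B n = B n' := by
      intro n n' hnn'
      simp only [hBdef]
      rw [hnn']
    have hdpos : 1 ≤ digit β 1 m := Nat.pos_of_ne_zero hm0
    -- T^p 1 = 0
    have hstep : ∀ k, m < k → (Tb β)^[k+1] 1 = β * (Tb β)^[k] 1 := by
      intro k hk
      set y := (Tb β)^[k] 1 with hy
      have hfl : ⌊β * y⌋ = 0 := by
        have hnn : (0:ℤ) ≤ ⌊β * y⌋ :=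
          Int.floor_nonneg.2 (mul_nonneg hbpos.le (iter_nonneg β k))
        have h0 : digit β 1 k = 0 := hmtail k hk
        unfold digit at h0
        rw [← hy] at h0
        omega
      rw [Function.iterate_succ_apply', ← hy]
      unfold Tb
      rw [hfl]
      norm_num
    have hgrow : ∀ j, (Tb β)^[p + j] 1 = β^j * (Tb β)^[p] 1 := by
      intro j
      induction j with
      | zero => simp
      | succ k ih =>
        have he : p + (k+1) = (p + k) + 1 := rfl
        rw [he, hstep (p+k) (by omega), ih, pow_succ]
        ring
    have hTp : (Tb β)^[p] 1 = 0 := by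
      by_contra hne
      have hpos : 0 < (Tb β)^[p] 1 := lt_of_le_of_ne (iter_nonneg β p) (Ne.symm hne)
      obtain ⟨j, hj⟩ := pow_unbounded_of_one_lt (1 / (Tb β)^[p] 1) hβ
      have h1 : (Tb β)^[p + j] 1 < 1 := iter_lt_one β (by omega)
      rw [hgrow j] at h1
      rw [div_lt_iff₀ hpos] at hj
      nlinarith
    have hβTm : β * (Tb β)^[m] 1 = (digit β 1 m : ℝ) := by
      have h1 : (Tb β)^[p] 1 = β * (Tb β)^[m] 1 - ⌊β * (Tb β)^[m] 1⌋ := by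
        rw [hpdef, Function.iterate_succ_apply']
        rfl
      rw [digit_cast β hbpos m]
      rw [hTp] at h1
      linarith
    -- the tail-value recurrence
    have hrec : ∀ n, (Tb β)^[n % p] 1 = (B n : ℝ)/β + (Tb β)^[(n+1) % p] 1 / β := by
      intro n
      rcases eq_or_ne (n % p) m with hcase | hcase
      · have hq := Nat.div_add_mod n p
        have hmod1 : (n+1) % p = 0 := by
          have he : n + 1 = p * (n / p + 1) := by
            rw [Nat.mul_add, Nat.mul_one]
            omega
          rw [he, Nat.mul_mod_right]
        have hBn : B n = digit β 1 m - 1 := by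
          simp only [hBdef]
          rw [if_pos hcase]
        rw [hcase, hmod1, hBn, Function.iterate_zero]
        have hcast : ((digit β 1 m - 1 : ℕ) : ℝ) = (digit β 1 m : ℝ) - 1 := by
          push_cast [hdpos]
          ring
        rw [hcast]
        simp only [id_eq]
        have hβne : (β:ℝ) ≠ 0 := ne_of_gt hbpos
        field_simp
        linarith [hβTm]
      · have hlt' : n % p < m := by
          have := Nat.mod_lt n hppos
          omega
        have hmod1 : (n+1) % p = n % p + 1 := by
          rw [Nat.add_mod]
          have h1p : 1 % p = 1 := Nat.mod_eq_of_lt (by omega)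
          rw [h1p, Nat.mod_eq_of_lt (by omega)]
        have hBn : B n = digit β 1 (n % p) := by
          simp only [hBdef]
          rw [if_neg hcase]
        rw [hmod1, hBn]
        exact digit_rec β hβ (n % p)
    -- reduce i to r = i % p
    rcases Nat.eq_zero_or_pos (i % p) with hr | hr
    · right
      funext n
      apply hBper
      have := Nat.add_mod n i p
      rw [hr, Nat.add_zero] at this
      rw [this, Nat.mod_mod_of_dvd n dvd_rfl]
    · set r := i % p with hrdef
      have hrp : r < p := Nat.mod_lt i hppos
      have hfe : (fun n => B (n + i)) = (fun n => B (n + r)) := by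
        funext n
        apply hBper
        rw [Nat.add_mod n i p, Nat.add_mod n r p, Nat.mod_eq_of_lt hrp]
      rw [hfe]
      have hu : ∀ n, (Tb β)^[(n + r) % p] 1
          = ((B (n + r) : ℕ) : ℝ)/β + (Tb β)^[((n+1) + r) % p] 1 / β := by
        intro n
        have := hrec (n + r)
        rwa [show (n + r) + 1 = (n + 1) + r from by omega] at this
      have hv1' : ∀ n, (Tb β)^[n % p] 1 ≤ 1 := fun n => iter_le_one β _
      have hu0' : ∀ n, (0:ℝ) ≤ (Tb β)^[(n + r) % p] 1 := fun n => iter_nonneg β _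
      have hlt0 : (Tb β)^[(0 + r) % p] 1 < (Tb β)^[0 % p] 1 := by
        rw [Nat.zero_add, Nat.mod_eq_of_lt hrp, Nat.zero_mod, Function.iterate_zero]
        exact iter_lt_one β hr
      exact lex_main β hβ (fun n => B (n + r)) B
        (fun n => (Tb β)^[(n + r) % p] 1) (fun n => (Tb β)^[n % p] 1)
        hu hrec hu0' hv1' hlt0
  · -- infinite expansion case
    simp only [epsStar, dif_neg h]
    have hu : ∀ n, (Tb β)^[n + i] 1
        = ((digit β 1 (n + i) : ℕ) : ℝ)/β + (Tb β)^[(n+1) + i] 1 / β := by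
      intro n
      have := digit_rec β hβ (n + i)
      rwa [show (n + i) + 1 = (n + 1) + i from by omega] at this
    have hlt0 : (Tb β)^[0 + i] 1 < (Tb β)^[0] 1 := by
      rw [Nat.zero_add, Function.iterate_zero]
      exact iter_lt_one β hi
    exact lex_main β hβ (fun n => digit β 1 (n + i)) (digit β 1)
      (fun n => (Tb β)^[n + i] 1) (fun n => (Tb β)^[n] 1)
      hu (digit_rec β hβ) (fun n => iter_nonneg β _) (fun n => iter_le_one β _) hlt0
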